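/- The elements ρ_λ := ρ_{λ_1} ρ_{λ_2} ⋯ ρ_{λ_l}, indexed by partitions λ of n, form a basis of the degree-n homogeneous component of the ring of symmetric functions over ℚ(q), where ρ_n satisfies ρ_0 = 1 and ρ_n = (q^n - 1)h_n - Σ_{k=1}^{n-1} ρ_{n-k} h_k. -/

import Mathlib

open MvPolynomial Finset

noncomputable section

/-- The coefficient field `ℚ(q)`, with `q` an indeterminate. -/
abbrev K : Type := RatFunc ℚ

noncomputable def q : K := RatFunc.X

/-- The ring of symmetric functions over `ℚ(q)`, realized as the polynomial ring on the
algebraically independent complete homogeneous symmetric functions `h_1, h_2, …`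
(the variable indexed by `n : ℕ+` represents `h_n`; the grading of symmetric functions
corresponds to the weighted degree in which the variable `h_n` has weight `n`). -/
abbrev SymFn : Type := MvPolynomial ℕ+ K

/-- `h n` is the `n`-th complete homogeneous symmetric function (`h 0 = 1`). -/
noncomputable def h (n : ℕ) : SymFn := if hn : 0 < n then X (⟨n, hn⟩ : ℕ+) else 1

namespace Stmt18Aux

/-- The weight function. -/
abbrev w : ℕ+ → ℕ := fun i => (i : ℕ)

lemma q_pow_sub_one_ne_zero {n : ℕ} (hn : 1 ≤ n) : q ^ n - (1 : K) ≠ 0 := by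
  intro hc
  rw [sub_eq_zero] at hc
  have h1 : (algebraMap (Polynomial ℚ) (RatFunc ℚ)) (Polynomial.X ^ n) =
      algebraMap (Polynomial ℚ) (RatFunc ℚ) 1 := by
    simpa [map_pow, RatFunc.algebraMap_X, q] using hc
  have h2 : (Polynomial.X : Polynomial ℚ) ^ n = 1 := RatFunc.algebraMap_injective ℚ h1
  have h3 := congrArg Polynomial.natDegree h2
  simp [Polynomial.natDegree_X_pow] at h3
  omega

lemma h_hom (n : ℕ) : (h n).IsWeightedHomogeneous w n := by
  unfold h
  split
  · exact isWeightedHomogeneous_X K w _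
  · have h0 : n = 0 := by omega
    subst h0
    exact isWeightedHomogeneous_one K w

section rho

variable (ρ : ℕ → SymFn) (hρ0 : ρ 0 = 1)
  (hρ : ∀ n, 1 ≤ n →
      ρ n = C (q ^ n - 1) * h n - ∑ k ∈ Finset.Icc 1 (n - 1), ρ (n - k) * h k)

include hρ0 hρ

lemma rho_hom : ∀ n, (ρ n).IsWeightedHomogeneous w n := by
  intro n
  induction n using Nat.strong_induction_on with
  | _ n ih =>
    rcases Nat.eq_zero_or_pos n with rfl | hn
    · rw [hρ0]; exact isWeightedHomogeneous_one K w
    · have hmem : ρ n ∈ weightedHomogeneousSubmodule K w n := by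
        rw [hρ n hn]
        apply sub_mem
        · have := (isWeightedHomogeneous_C w (q ^ n - 1)).mul (h_hom n)
          rw [mem_weightedHomogeneousSubmodule]
          simpa using this
        · apply Submodule.sum_mem
          intro k hk
          simp only [Finset.mem_Icc] at hk
          have hlt : n - k < n := by omega
          have hmul := (ih (n - k) hlt).mul (h_hom k)
          have heq : (n - k) + k = n := by omega
          rw [heq] at hmul
          exact hmul
      exact hmem

/-- The substitution endomorphism sending `h_i` (= `X i`) to `ρ i`. -/
noncomputable def φ : SymFn →ₐ[K] SymFn := aeval (fun i : ℕ+ => ρ (i : ℕ))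

lemma X_mem_range : ∀ m : ℕ, ∀ hm : 0 < m,
    (X (⟨m, hm⟩ : ℕ+) : SymFn) ∈ (φ ρ).range := by
  intro m
  induction m using Nat.strong_induction_on with
  | _ m ih =>
    intro hm
    have hrho : ∀ j : ℕ, ρ j ∈ (φ ρ).range := by
      intro j
      rcases Nat.eq_zero_or_pos j with rfl | hj
      · rw [hρ0]; exact one_mem _
      · exact ⟨X ⟨j, hj⟩, aeval_X _ _⟩
    have hX : C (q ^ m - 1) * X (⟨m, hm⟩ : ℕ+) ∈ (φ ρ).range := by
      have hh : h m = X (⟨m, hm⟩ : ℕ+) := dif_pos hm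
      have hrec := hρ m hm
      rw [hh] at hrec
      have hrw : C (q ^ m - 1) * X (⟨m, hm⟩ : ℕ+) =
          ρ m + ∑ k ∈ Finset.Icc 1 (m - 1), ρ (m - k) * h k := by
        rw [hrec, sub_add_cancel]
        rfl
      rw [hrw]
      apply add_mem (hrho m)
      apply sum_mem
      intro k hk
      simp only [Finset.mem_Icc] at hk
      have hk1 : 0 < k := hk.1
      have hhk : h k = X (⟨k, hk1⟩ : ℕ+) := dif_pos hk1
      rw [hhk]
      exact mul_mem (hrho (m - k)) (ih k (by omega) hk1)
    have hXeq : (X (⟨m, hm⟩ : ℕ+) : SymFn) =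
        (q ^ m - 1)⁻¹ • (C (q ^ m - 1) * X (⟨m, hm⟩ : ℕ+)) := by
      erw [smul_eq_C_mul]
      rw [← mul_assoc, ← C_mul,
        inv_mul_cancel₀ (q_pow_sub_one_ne_zero hm), C_1, one_mul]
      rfl
    rw [hXeq]
    exact Subalgebra.smul_mem _ hX _

lemma phi_surj : Function.Surjective (φ ρ) := by
  rw [← AlgHom.range_eq_top]
  rw [eq_top_iff, ← MvPolynomial.adjoin_range_X]
  rw [Algebra.adjoin_le_iff]
  rintro _ ⟨i, rfl⟩
  exact X_mem_range ρ hρ0 hρ i.1 i.2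

end rho

section homog

variable (g : ℕ+ → SymFn) (hg : ∀ i : ℕ+, (g i).IsWeightedHomogeneous w (i : ℕ))

lemma hom_pow {p : SymFn} {m : ℕ} (hp : p.IsWeightedHomogeneous w m) (k : ℕ) :
    (p ^ k).IsWeightedHomogeneous w (k * m) := by
  induction k with
  | zero => simpa using isWeightedHomogeneous_one K w
  | succ k ih =>
    rw [pow_succ]
    have := ih.mul hp
    rwa [show k * m + m = (k + 1) * m by ring] at this

include hg in
lemma aeval_monomial_hom (d : ℕ+ →₀ ℕ) (c : K) :
    (aeval g (monomial d c)).IsWeightedHomogeneous w (Finsupp.weight w d) := by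
  rw [aeval_monomial]
  have hwd : (Finsupp.weight w d : ℕ) = ∑ i ∈ d.support, d i * w i := by
    rw [Finsupp.weight_apply, Finsupp.sum]
    simp [smul_eq_mul]
  have hprod : (d.prod fun i k => g i ^ k).IsWeightedHomogeneous w
      (∑ i ∈ d.support, d i * w i) := by
    rw [Finsupp.prod]
    exact IsWeightedHomogeneous.prod d.support _ _ fun i _ => hom_pow (hg i) (d i)
  have := (isWeightedHomogeneous_C w (M := ℕ) c).mul hprod
  rw [zero_add] at this
  rw [hwd]
  simpa [MvPolynomial.algebraMap_eq] using this

include hg in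
lemma aeval_mem {p : SymFn} {m : ℕ} (hp : p ∈ weightedHomogeneousSubmodule K w m) :
    aeval g p ∈ weightedHomogeneousSubmodule K w m := by
  have hsum : aeval g p = ∑ d ∈ p.support, aeval g (monomial d (coeff d p)) := by
    conv_lhs => rw [p.as_sum]
    rw [map_sum]
  rw [hsum]
  apply Submodule.sum_mem
  intro d hd
  have hwdm : Finsupp.weight w d = m := hp (mem_support_iff.mp hd)
  rw [mem_weightedHomogeneousSubmodule, ← hwdm]
  exact aeval_monomial_hom g hg d _

include hg in
lemma exists_hom_preimage (hsurj : Function.Surjective (aeval g : SymFn →ₐ[K] SymFn))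
    {m : ℕ} {y : SymFn} (hy : y ∈ weightedHomogeneousSubmodule K w m) :
    ∃ x ∈ weightedHomogeneousSubmodule K w m, aeval g x = y := by
  classical
  obtain ⟨x, hx⟩ := hsurj y
  set T := x.support.filter (fun d => Finsupp.weight w d = m) with hT
  refine ⟨∑ d ∈ T, monomial d (coeff d x), ?_, ?_⟩
  · apply Submodule.sum_mem
    intro d hd
    rw [hT, Finset.mem_filter] at hd
    exact isWeightedHomogeneous_monomial w d _ hd.2
  · have hy' : (y : SymFn).IsWeightedHomogeneous w m := hy
    have hsum : y = ∑ d ∈ x.support, aeval g (monomial d (coeff d x)) := by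
      conv_lhs => rw [← hx]
      conv_lhs => rw [x.as_sum]
      rw [map_sum]
    have hcomp : y = ∑ d ∈ x.support,
        weightedHomogeneousComponent w m (aeval g (monomial d (coeff d x))) := by
      conv_lhs => rw [← hy'.weightedHomogeneousComponent_same, hsum]
      rw [map_sum]
    have hite : ∀ d ∈ x.support,
        weightedHomogeneousComponent w m (aeval g (monomial d (coeff d x))) =
          if Finsupp.weight w d = m then aeval g (monomial d (coeff d x)) else 0 := by
      intro d _
      by_cases hdm : Finsupp.weight w d = m
      · rw [if_pos hdm]
        have := aeval_monomial_hom g hg d (coeff d x)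
        rw [hdm] at this
        exact this.weightedHomogeneousComponent_same
      · rw [if_neg hdm]
        exact (aeval_monomial_hom g hg d (coeff d x)).weightedHomogeneousComponent_ne m
          fun hc => hdm hc.symm
    rw [map_sum, Finset.sum_filter]
    rw [hcomp, Finset.sum_congr rfl hite]

end homog

section comb

variable {n : ℕ}

/-- The parts of a partition as a multiset of positive naturals. -/
def MP (lam : n.Partition) : Multiset ℕ+ :=
  lam.parts.pmap (fun a ha => (⟨a, ha⟩ : ℕ+)) (fun _ h => lam.parts_pos h)

lemma MP_coe (lam : n.Partition) :
    (MP lam).map (fun i : ℕ+ => (i : ℕ)) = lam.parts := by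
  unfold MP
  erw [Multiset.map_pmap]
  exact (Multiset.pmap_eq_map _ _ _ _).trans (lam.parts.map_id)

lemma map_parts (lam : n.Partition) (f : ℕ → SymFn) :
    lam.parts.map f = (MP lam).map (fun i : ℕ+ => f (i : ℕ)) := by
  rw [← MP_coe lam, Multiset.map_map]
  rfl

/-- The exponent finsupp associated with a partition. -/
def dl (lam : n.Partition) : ℕ+ →₀ ℕ := Multiset.toFinsupp (MP lam)

lemma toMultiset_dl (lam : n.Partition) : Finsupp.toMultiset (dl lam) = MP lam :=
  Multiset.toFinsupp_toMultiset _

lemma prod_map_pow (d : ℕ+ →₀ ℕ) (f : ℕ+ → SymFn) :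
    ((Finsupp.toMultiset d).map f).prod = d.prod fun i k => f i ^ k := by
  rw [Finsupp.toMultiset_map, Finsupp.prod_toMultiset]
  exact Finsupp.prod_mapDomain_index (fun b => pow_zero b) (fun b m₁ m₂ => pow_add b m₁ m₂)

lemma sum_map_coe (d : ℕ+ →₀ ℕ) :
    ((Finsupp.toMultiset d).map (fun i : ℕ+ => (i : ℕ))).sum = Finsupp.weight w d := by
  rw [Finsupp.toMultiset_map, Finsupp.sum_toMultiset, Finsupp.weight_apply]
  refine (Finsupp.sum_mapDomain_index (fun b => zero_smul ℕ b) ?_).trans ?_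
  · intro b m₁ m₂; exact add_smul m₁ m₂ b
  · rfl

lemma weight_dl (lam : n.Partition) : Finsupp.weight w (dl lam) = n := by
  rw [← sum_map_coe, toMultiset_dl, MP_coe, lam.parts_sum]

lemma monomial_dl (lam : n.Partition) :
    (monomial (dl lam) (1 : K) : SymFn) = ((MP lam).map X).prod := by
  rw [monomial_eq, C_1, one_mul, ← toMultiset_dl, prod_map_pow]

lemma dl_inj : Function.Injective (dl (n := n)) := by
  intro a b hab
  have hMP : MP a = MP b := by
    rw [← toMultiset_dl a, ← toMultiset_dl b, hab]
  apply Nat.Partition.ext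
  rw [← MP_coe a, ← MP_coe b, hMP]

lemma dl_surj {d : ℕ+ →₀ ℕ} (hd : Finsupp.weight w d = n) :
    ∃ lam : n.Partition, dl lam = d := by
  have hpos : ∀ {i : ℕ}, i ∈ (Finsupp.toMultiset d).map (fun i : ℕ+ => (i : ℕ)) → 0 < i := by
    intro i hi
    rw [Multiset.mem_map] at hi
    obtain ⟨j, _, rfl⟩ := hi
    exact j.2
  have hsum : ((Finsupp.toMultiset d).map (fun i : ℕ+ => (i : ℕ))).sum = n := by
    rw [sum_map_coe, hd]
  refine ⟨⟨_, hpos, hsum⟩, ?_⟩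
  have hMP : MP (⟨(Finsupp.toMultiset d).map (fun i : ℕ+ => (i : ℕ)), hpos, hsum⟩ :
      n.Partition) = Finsupp.toMultiset d := by
    apply Multiset.map_injective (f := fun i : ℕ+ => (i : ℕ)) PNat.coe_injective
    rw [MP_coe]
  unfold dl
  rw [hMP, Finsupp.toMultiset_toFinsupp]

end comb

end Stmt18Aux

open Stmt18Aux in
/-- With `ρ_0 = 1` and `ρ_n = (q^n - 1) h_n - ∑_{k=1}^{n-1} ρ_{n-k} h_k`, the products
`ρ_λ = ρ_{λ_1} ⋯ ρ_{λ_l}`, indexed by the partitions `λ` of `n`, form a basis of the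
degree-`n` homogeneous component of the ring of symmetric functions over `ℚ(q)`. -/
theorem stmt_18 (ρ : ℕ → SymFn) (hρ0 : ρ 0 = 1)
    (hρ : ∀ n, 1 ≤ n →
      ρ n = C (q ^ n - 1) * h n - ∑ k ∈ Finset.Icc 1 (n - 1), ρ (n - k) * h k)
    (n : ℕ) :
    LinearIndependent K (fun lam : n.Partition => (lam.parts.map ρ).prod) ∧
      Submodule.span K (Set.range fun lam : n.Partition => (lam.parts.map ρ).prod) =
        weightedHomogeneousSubmodule K (fun i : ℕ+ => (i : ℕ)) n := by
  classical
  set F : n.Partition → SymFn := fun lam => (lam.parts.map ρ).prod with hF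
  set B : n.Partition → SymFn := fun lam => monomial (dl lam) (1 : K) with hB
  set V : Submodule K SymFn := weightedHomogeneousSubmodule K w n with hV
  have hg : ∀ i : ℕ+, ((fun i : ℕ+ => ρ (i : ℕ)) i).IsWeightedHomogeneous w (i : ℕ) :=
    fun i => rho_hom ρ hρ0 hρ i
  -- F = φ ∘ B
  have hFB : ∀ lam, F lam = φ ρ (B lam) := by
    intro lam
    rw [hB, hF]
    simp only [monomial_dl]
    rw [map_parts lam ρ]
    unfold φ
    rw [map_multiset_prod, Multiset.map_map]
    congr 1
    apply Multiset.map_congr rfl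
    intro i _
    simp [aeval_X]
  -- B is linearly independent
  have hBli : LinearIndependent K B := by
    have h1 := (MvPolynomial.basisMonomials ℕ+ K).linearIndependent
    rw [coe_basisMonomials] at h1
    exact h1.comp dl dl_inj
  -- B lam ∈ V
  have hBmem : ∀ lam, B lam ∈ V := by
    intro lam
    exact isWeightedHomogeneous_monomial w _ _ (weight_dl lam)
  -- span of B is V
  have hBspan : Submodule.span K (Set.range B) = V := by
    apply le_antisymm
    · rw [Submodule.span_le]
      rintro _ ⟨lam, rfl⟩
      exact hBmem lam
    · intro p hp
      have hp' : p.IsWeightedHomogeneous w n := hp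
      rw [p.as_sum]
      apply Submodule.sum_mem
      intro d hd
      obtain ⟨lam, rfl⟩ := dl_surj (hp' (mem_support_iff.mp hd))
      have : (monomial (dl lam) (coeff (dl lam) p) : SymFn) = coeff (dl lam) p • B lam := by
        rw [hB]
        simp [smul_monomial]
      rw [this]
      exact Submodule.smul_mem _ _ (Submodule.subset_span ⟨lam, rfl⟩)
  -- V is finite dimensional
  have hfin : FiniteDimensional K V := by
    rw [← hBspan]
    exact FiniteDimensional.span_of_finite K (Set.finite_range B)
  -- the restricted endomorphism ψ
  have hmapsto : ∀ x ∈ V, φ ρ x ∈ V := fun x hx => aeval_mem _ hg hx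
  set ψ : V →ₗ[K] V := ((φ ρ).toLinearMap).restrict hmapsto with hψ
  have hψsurj : Function.Surjective ψ := by
    rintro ⟨y, hy⟩
    obtain ⟨x, hxV, hxy⟩ := exists_hom_preimage _ hg (phi_surj ρ hρ0 hρ) hy
    exact ⟨⟨x, hxV⟩, Subtype.ext hxy⟩
  have hψinj : Function.Injective ψ := LinearMap.injective_iff_surjective.mpr hψsurj
  -- lift B to V
  set B' : n.Partition → V := fun lam => ⟨B lam, hBmem lam⟩ with hB'
  have hB'li : LinearIndependent K B' := by
    apply LinearIndependent.of_comp V.subtype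
    convert hBli
    rfl
  constructor
  · -- linear independence of F
    have h1 : LinearIndependent K (fun lam => ψ (B' lam)) :=
      hB'li.map' ψ (LinearMap.ker_eq_bot.mpr hψinj)
    have h2 : LinearIndependent K (fun lam => V.subtype (ψ (B' lam))) :=
      h1.map' V.subtype V.ker_subtype
    have h3 : (fun lam => V.subtype (ψ (B' lam))) = F := by
      funext lam
      rw [hFB lam]
      rfl
    rwa [h3] at h2
  · -- span of F is V
    apply le_antisymm
    · rw [Submodule.span_le]
      rintro _ ⟨lam, rfl⟩
      have : F lam ∈ V := by
        rw [hFB lam]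
        exact hmapsto _ (hBmem lam)
      exact this
    · intro y hy
      obtain ⟨x, hxV, hxy⟩ := exists_hom_preimage _ hg (phi_surj ρ hρ0 hρ) hy
      have hxV' : x ∈ Submodule.span K (Set.range B) := by rw [hBspan]; exact hxV
      have : y ∈ Submodule.map ((φ ρ).toLinearMap) (Submodule.span K (Set.range B)) :=
        ⟨x, hxV', hxy⟩
      rw [Submodule.map_span, ← Set.range_comp] at this
      have hcomp : (⇑(φ ρ).toLinearMap ∘ B) = F := by
        funext lam
        rw [hFB lam]
        rfl
      rwa [hcomp] at this

end
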